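/- The maximum value of ω(n) over n ≤ x is asymptotically (log x)/(log log x); more precisely, max_{n ≤ x} ω(n) = (log x / log log x)(1 + O(1/log log x)) as x → ∞. -/

import Mathlib

open Real Finset Filter

/-- Number of unordered factorizations of `n` into parts `> 1`. -/
noncomputable def littlef (n : ℕ) : ℕ :=
  Nat.card {s : Multiset ℕ // s.prod = n ∧ ∀ a ∈ s, 1 < a}

/-- Number of unordered factorizations of `n` into pairwise coprime parts `> 1`. -/
noncomputable def bigF (n : ℕ) : ℕ :=
  Nat.card {s : Multiset ℕ // s.prod = n ∧ (∀ a ∈ s, 1 < a) ∧ s.Pairwise Nat.Coprime}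

/-- Number of ordered factorizations of `n` into parts `> 1`. -/
noncomputable def littleg (n : ℕ) : ℕ :=
  Nat.card {l : List ℕ // l.prod = n ∧ ∀ a ∈ l, 1 < a}

/-- Number of ordered factorizations of `n` into pairwise coprime parts `> 1`. -/
noncomputable def bigG (n : ℕ) : ℕ :=
  Nat.card {l : List ℕ // l.prod = n ∧ (∀ a ∈ l, 1 < a) ∧ l.Pairwise Nat.Coprime}

/-- The `k`-th Bell number: the number of set partitions of a `k`-element set. -/
noncomputable def bell (k : ℕ) : ℕ :=
  Nat.card (Finpartition (Finset.univ : Finset (Fin k)))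

/-- The `k`-th ordered Bell (Fubini) number: the number of ordered set partitions
of a `k`-element set, i.e. lists of pairwise disjoint nonempty blocks covering it. -/
noncomputable def fubini (k : ℕ) : ℕ :=
  Nat.card {l : List (Finset (Fin k)) //
    (∀ s ∈ l, s.Nonempty) ∧ l.Pairwise Disjoint ∧ l.foldr (· ∪ ·) ∅ = Finset.univ}

/-- `ω n`: the number of distinct prime factors of `n`. -/
def omegaN (n : ℕ) : ℕ := n.primeFactors.card

/-- `π(x, k)`: the number of `2 ≤ n ≤ x` with exactly `k` distinct prime factors. -/
noncomputable def piOmega (x : ℝ) (k : ℕ) : ℕ :=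
  Nat.card {n : ℕ // 2 ≤ n ∧ (n : ℝ) ≤ x ∧ omegaN n = k}

/-- `L(x) = exp(log x · log log log x / log log x)`. -/
noncomputable def Lfun (x : ℝ) : ℝ :=
  Real.exp (Real.log x * Real.log (Real.log (Real.log x)) / Real.log (Real.log x))


namespace MaxOmega

open Asymptotics

noncomputable def theta (N : ℕ) : ℝ :=
  ∑ p ∈ (Finset.range (N+1)).filter Nat.Prime, Real.log p

def Kp (N : ℕ) : ℕ := ((Finset.range (N+1)).filter Nat.Prime).card

lemma theta_nonneg (N : ℕ) : 0 ≤ theta N :=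
  Finset.sum_nonneg fun p hp => Real.log_natCast_nonneg p

lemma theta_eq (N : ℕ) : theta N = Real.log (primorial N) := by
  unfold theta primorial
  rw [Nat.cast_prod, Real.log_prod]
  intro p hp
  simp only [Finset.mem_filter] at hp
  exact_mod_cast hp.2.pos.ne'

lemma theta_le (N : ℕ) : theta N ≤ N * Real.log 4 := by
  rw [theta_eq, ← Real.log_pow]
  apply Real.log_le_log (by exact_mod_cast primorial_pos N)
  exact_mod_cast primorial_le_4_pow N

lemma primorial_mono : Monotone primorial := by
  intro m n h
  unfold primorial
  apply Finset.prod_le_prod_of_subset_of_one_le'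
  · exact Finset.filter_subset_filter _ (Finset.range_subset_range.2 (by omega))
  · intro p hp _
    exact (Finset.mem_filter.1 hp).2.one_lt.le

lemma primorial_succ_le (N : ℕ) : primorial (N+1) ≤ (N+1) * primorial N := by
  unfold primorial
  have hsub : (Finset.range (N+2)).filter Nat.Prime ⊆
      insert (N+1) ((Finset.range (N+1)).filter Nat.Prime) := by
    intro p hp
    simp only [Finset.mem_filter, Finset.mem_range] at hp
    rcases Nat.lt_or_ge p (N+1) with h | h
    · exact Finset.mem_insert_of_mem (Finset.mem_filter.2 ⟨Finset.mem_range.2 h, hp.2⟩)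
    · have : p = N+1 := by omega
      simp [this]
  calc ∏ p ∈ (Finset.range (N+2)).filter Nat.Prime, p
      ≤ ∏ p ∈ insert (N+1) ((Finset.range (N+1)).filter Nat.Prime), p := by
        apply Finset.prod_le_prod_of_subset_of_one_le' hsub
        intro p hp hnp
        rcases Finset.mem_insert.1 hp with rfl | hmem
        · omega
        · exact (Finset.mem_filter.1 hmem).2.one_lt.le
    _ ≤ (N+1) * primorial N := le_of_eq (Finset.prod_insert (by simp))

lemma theta_succ_le (N : ℕ) : theta (N+1) ≤ theta N + Real.log ((N:ℝ)+1) := by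
  rw [theta_eq, theta_eq]
  have h1 : (0:ℝ) < primorial N := by exact_mod_cast primorial_pos N
  have h2 : (0:ℝ) < (N:ℝ)+1 := by positivity
  calc Real.log (primorial (N+1)) ≤ Real.log (((N+1) : ℕ) * (primorial N : ℝ)) := by
        apply Real.log_le_log (by exact_mod_cast primorial_pos (N+1))
        exact_mod_cast primorial_succ_le N
    _ = Real.log ((N:ℝ)+1) + Real.log (primorial N) := by
        push_cast
        rw [Real.log_mul (by positivity) h1.ne']
    _ = Real.log (primorial N) + Real.log ((N:ℝ)+1) := by ring


lemma Kp_le_self (N : ℕ) : Kp N ≤ N := by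
  unfold Kp
  have : (Finset.range (N+1)).filter Nat.Prime ⊆ Finset.Ico 2 (N+1) := by
    intro p hp
    simp only [Finset.mem_filter, Finset.mem_range] at hp
    exact Finset.mem_Ico.2 ⟨hp.2.two_le, hp.1⟩
  calc ((Finset.range (N+1)).filter Nat.Prime).card ≤ (Finset.Ico 2 (N+1)).card :=
        Finset.card_le_card this
    _ = N + 1 - 2 := Nat.card_Ico _ _
    _ ≤ N := by omega

lemma theta_le_Kp_mul (N : ℕ) : theta N ≤ (Kp N : ℝ) * Real.log N := by
  unfold theta Kp
  have h : ∀ p ∈ (Finset.range (N+1)).filter Nat.Prime, Real.log p ≤ Real.log N := by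
    intro p hp
    simp only [Finset.mem_filter, Finset.mem_range] at hp
    apply Real.log_le_log (by exact_mod_cast hp.2.pos)
    exact_mod_cast Nat.lt_succ_iff.1 hp.1
  calc ∑ p ∈ (Finset.range (N+1)).filter Nat.Prime, Real.log p
      ≤ ∑ _p ∈ (Finset.range (N+1)).filter Nat.Prime, Real.log N := Finset.sum_le_sum h
    _ = _ := by rw [Finset.sum_const, nsmul_eq_mul]


lemma sqrt_log_pow_isLittleO (k : ℕ) :
    (fun t : ℝ => Real.sqrt t * Real.log t ^ k) =o[atTop] (id : ℝ → ℝ) := by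
  have h1 : (fun t : ℝ => Real.sqrt t * Real.log t ^ k) =ᶠ[atTop]
      (fun t : ℝ => t ^ ((1:ℝ)/2) * Real.log t ^ ((k:ℝ))) := by
    filter_upwards [eventually_ge_atTop (1:ℝ)] with t ht
    rw [Real.sqrt_eq_rpow, ← Real.rpow_natCast (Real.log t) k]
  have h2 : (fun t : ℝ => t ^ ((1:ℝ)/2) * Real.log t ^ ((k:ℝ))) =o[atTop]
      (fun t : ℝ => t ^ ((1:ℝ)/2) * t ^ ((1:ℝ)/2)) :=
    (isBigO_refl (fun t : ℝ => t ^ ((1:ℝ)/2)) atTop).mul_isLittleO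
      (isLittleO_log_rpow_rpow_atTop (k:ℝ) one_half_pos)
  have h3 : (fun t : ℝ => t ^ ((1:ℝ)/2) * t ^ ((1:ℝ)/2)) =ᶠ[atTop] (id : ℝ → ℝ) := by
    filter_upwards [eventually_gt_atTop (0:ℝ)] with t ht
    rw [← Real.rpow_add ht]
    norm_num
  exact (h2.congr' h1.symm h3)

lemma eventually_sqrt_log_pow_le (k : ℕ) {ε : ℝ} (hε : 0 < ε) :
    ∀ᶠ t : ℝ in atTop, Real.sqrt t * Real.log t ^ k ≤ ε * t := by
  have h := (sqrt_log_pow_isLittleO k).bound hε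
  filter_upwards [h, eventually_ge_atTop (1:ℝ)] with t h1 h2
  have : Real.sqrt t * Real.log t ^ k ≤ |Real.sqrt t * Real.log t ^ k| := le_abs_self _
  calc Real.sqrt t * Real.log t ^ k ≤ ‖Real.sqrt t * Real.log t ^ k‖ := this
    _ ≤ ε * ‖id t‖ := h1
    _ = ε * t := by simp [Real.norm_eq_abs, abs_of_nonneg (by linarith : (0:ℝ) ≤ t)]

lemma eventually_log_le {ε : ℝ} (hε : 0 < ε) :
    ∀ᶠ t : ℝ in atTop, Real.log t ≤ ε * t := by
  have h := Real.isLittleO_log_id_atTop.bound hε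
  filter_upwards [h, eventually_ge_atTop (1:ℝ)] with t h1 h2
  calc Real.log t ≤ ‖Real.log t‖ := le_abs_self _
    _ ≤ ε * ‖id t‖ := h1
    _ = ε * t := by simp [Real.norm_eq_abs, abs_of_nonneg (by linarith : (0:ℝ) ≤ t)]


lemma centralBinom_le_pow_mul_primorial (m : ℕ) (hm : 1 ≤ m) :
    Nat.centralBinom m ≤ (2*m)^(Nat.sqrt (2*m) + 1) * primorial (2*m) := by
  have h2m : 0 < 2*m := by omega
  rw [← Nat.prod_pow_factorization_centralBinom m]
  rw [← Finset.prod_filter_mul_prod_filter_not (Finset.range (2*m+1))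
    (fun p => p ≤ Nat.sqrt (2*m))]
  have hsmall : ∏ p ∈ (Finset.range (2*m+1)).filter (fun p => p ≤ Nat.sqrt (2*m)),
      p ^ (Nat.centralBinom m).factorization p ≤ (2*m)^(Nat.sqrt (2*m) + 1) := by
    calc ∏ p ∈ (Finset.range (2*m+1)).filter (fun p => p ≤ Nat.sqrt (2*m)),
          p ^ (Nat.centralBinom m).factorization p
        ≤ ∏ _p ∈ (Finset.range (2*m+1)).filter (fun p => p ≤ Nat.sqrt (2*m)), (2*m) := by
          apply Finset.prod_le_prod' 
          intro p _
          exact Nat.pow_factorization_choose_le h2m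
      _ = (2*m)^(((Finset.range (2*m+1)).filter (fun p => p ≤ Nat.sqrt (2*m))).card) :=
          Finset.prod_const _
      _ ≤ (2*m)^(Nat.sqrt (2*m) + 1) := by
          apply Nat.pow_le_pow_right (by omega)
          calc ((Finset.range (2*m+1)).filter (fun p => p ≤ Nat.sqrt (2*m))).card
              ≤ (Finset.range (Nat.sqrt (2*m) + 1)).card := by
                apply Finset.card_le_card
                intro p hp
                simp only [Finset.mem_filter, Finset.mem_range] at hp ⊢
                omega
            _ = Nat.sqrt (2*m) + 1 := Finset.card_range _
  have hlarge : ∏ p ∈ (Finset.range (2*m+1)).filter (fun p => ¬ p ≤ Nat.sqrt (2*m)),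
      p ^ (Nat.centralBinom m).factorization p ≤ primorial (2*m) := by
    set A := (Finset.range (2*m+1)).filter (fun p => ¬ p ≤ Nat.sqrt (2*m)) with hA
    set B := A.filter (fun p => (Nat.centralBinom m).factorization p ≠ 0) with hB
    have hprod : ∏ p ∈ A, p ^ (Nat.centralBinom m).factorization p
        = ∏ p ∈ B, p ^ (Nat.centralBinom m).factorization p := by
      symm
      apply Finset.prod_subset (Finset.filter_subset _ _)
      intro p hpA hpB
      rw [Finset.mem_filter] at hpB
      push_neg at hpB
      rw [hpB hpA, pow_zero]
    rw [hprod]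
    have hBval : ∀ p ∈ B, p ^ (Nat.centralBinom m).factorization p = p := by
      intro p hp
      rw [hB, Finset.mem_filter, hA, Finset.mem_filter] at hp
      obtain ⟨⟨hmem, hsqrt⟩, hne⟩ := hp
      simp only [Finset.mem_range] at hmem
      have h1 : (Nat.centralBinom m).factorization p ≤ 1 := by
        apply Nat.factorization_choose_le_one
        have := Nat.sqrt_lt'.1 (by omega : Nat.sqrt (2*m) < p)
        nlinarith [this]
      interval_cases h : (Nat.centralBinom m).factorization p
      · omega
      · exact pow_one p
    rw [Finset.prod_congr rfl hBval]
    apply Finset.prod_le_prod_of_subset_of_one_le'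
    · intro p hp
      rw [hB, Finset.mem_filter, hA, Finset.mem_filter] at hp
      obtain ⟨⟨hrange, _⟩, hne⟩ := hp
      have hprime : p.Prime := by
        by_contra hnp
        exact hne (Nat.factorization_eq_zero_of_not_prime _ hnp)
      exact Finset.mem_filter.2 ⟨hrange, hprime⟩
    · intro p hp _
      exact (Finset.mem_filter.1 hp).2.one_lt.le
  calc (∏ p ∈ (Finset.range (2*m+1)).filter (fun p => p ≤ Nat.sqrt (2*m)),
          p ^ (Nat.centralBinom m).factorization p) *
        ∏ p ∈ (Finset.range (2*m+1)).filter (fun p => ¬ p ≤ Nat.sqrt (2*m)),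
          p ^ (Nat.centralBinom m).factorization p
      ≤ (2*m)^(Nat.sqrt (2*m) + 1) * primorial (2*m) :=
        Nat.mul_le_mul hsmall hlarge


lemma theta_mono : Monotone theta := by
  intro a b h
  rw [theta_eq, theta_eq]
  apply Real.log_le_log (by exact_mod_cast primorial_pos a)
  have : primorial a ≤ primorial b := by
    unfold primorial
    apply Finset.prod_le_prod_of_subset_of_one_le'
    · exact Finset.filter_subset_filter _ (Finset.range_subset_range.2 (by omega))
    · intro p hp _
      exact (Finset.mem_filter.1 hp).2.one_lt.le
  exact_mod_cast this

lemma theta_two_mul_ge (m : ℕ) (hm : 1 ≤ m) :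
    (m:ℝ) * Real.log 4 - (Real.sqrt (2*m) + 2) * Real.log (2*m) ≤ theta (2*m) := by
  have h2m : (0:ℝ) < 2*(m:ℝ) := by positivity
  have key : (4:ℕ)^m ≤ (2*m)^(Nat.sqrt (2*m) + 2) * primorial (2*m) := by
    calc (4:ℕ)^m ≤ 2*m * Nat.centralBinom m :=
          Nat.four_pow_le_two_mul_self_mul_centralBinom m hm
      _ ≤ 2*m * ((2*m)^(Nat.sqrt (2*m) + 1) * primorial (2*m)) :=
          Nat.mul_le_mul_left _ (centralBinom_le_pow_mul_primorial m hm)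
      _ = (2*m)^(Nat.sqrt (2*m) + 2) * primorial (2*m) := by ring
  have keyR : ((4:ℝ))^m ≤ ((2*m:ℕ):ℝ)^(Nat.sqrt (2*m) + 2) * (primorial (2*m) : ℝ) := by
    exact_mod_cast key
  have hne : ((2*m:ℕ):ℝ) ≠ 0 := by
    have : (0:ℕ) < 2*m := by omega
    exact_mod_cast this.ne'
  have hlog := Real.log_le_log (by positivity) keyR
  rw [Real.log_pow, Real.log_mul (by positivity) (by exact_mod_cast (primorial_pos (2*m)).ne'),
    Real.log_pow] at hlog
  have hsqrt : ((Nat.sqrt (2*m) : ℝ)) ≤ Real.sqrt (2*m) := by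
    rw [Real.le_sqrt (by positivity) (by positivity)]
    exact_mod_cast Nat.sqrt_le' (2*m)
  have hlogpos : 0 ≤ Real.log ((2*m:ℕ):ℝ) := by
    apply Real.log_nonneg
    exact_mod_cast (by omega : 1 ≤ 2*m)
  rw [theta_eq]
  push_cast at hlog hlogpos hsqrt ⊢
  have hmul := mul_le_mul_of_nonneg_right
    (by linarith : ((Nat.sqrt (2*m) : ℝ) + 2) ≤ Real.sqrt (2*(m:ℝ)) + 2) hlogpos
  push_cast at hmul
  linarith

lemma theta_ge : ∃ M : ℕ, 3 ≤ M ∧ ∀ N, M ≤ N → (N:ℝ)/2 ≤ theta N := by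
  have hev : ∀ᶠ t : ℝ in atTop,
      Real.sqrt t * Real.log t ≤ (1/20 : ℝ) * t ∧ Real.log t ≤ (1/40:ℝ) * t := by
    have h1 := eventually_sqrt_log_pow_le 1 (by norm_num : (0:ℝ) < 1/20)
    have h2 := eventually_log_le (by norm_num : (0:ℝ) < 1/40)
    filter_upwards [h1, h2] with t h1 h2
    exact ⟨by simpa using h1, h2⟩
  obtain ⟨T, hT⟩ := eventually_atTop.1 hev
  obtain ⟨M₀, hM₀⟩ := exists_nat_ge (max T 0)
  refine ⟨2 * M₀ + 20, by omega, ?_⟩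
  intro N hN
  set m := N / 2 with hm
  have hmN : 2 * m ≤ N ∧ N ≤ 2 * m + 1 := by omega
  have hm1 : M₀ + 9 ≤ m := by omega
  have hmR : (M₀:ℝ) ≤ (m:ℝ) := by exact_mod_cast (by omega : M₀ ≤ m)
  have hmnn : (0:ℝ) ≤ (m:ℝ) := by positivity
  have ht : T ≤ (2*(m:ℝ)) := by
    have h1 : T ≤ (M₀:ℝ) := le_trans (le_max_left _ _) hM₀
    linarith
  obtain ⟨hb1, hb2⟩ := hT _ ht
  have hth := theta_two_mul_ge m (by omega)
  have hlog4 : (1.386:ℝ) ≤ Real.log 4 := by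
    have : (4:ℝ) = 2^2 := by norm_num
    rw [this, Real.log_pow]
    have := Real.log_two_gt_d9
    push_cast
    linarith
  -- (sqrt(2m)+2) * log(2m) ≤ sqrt(2m) log(2m) + 2 log(2m) ≤ (1/20)(2m) + 2(1/40)(2m) = 0.15 m ... 
  have hmpos : (0:ℝ) < m := by exact_mod_cast (by omega : 0 < m)
  have hm1R : (1:ℝ) ≤ (m:ℝ) := by exact_mod_cast (by omega : 1 ≤ m)
  have hlognn : 0 ≤ Real.log (2*(m:ℝ)) := Real.log_nonneg (by linarith)

  have hsqnn : 0 ≤ Real.sqrt (2*(m:ℝ)) := Real.sqrt_nonneg _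
  have herr : (Real.sqrt (2*(m:ℝ)) + 2) * Real.log (2*(m:ℝ)) ≤ (0.2:ℝ) * m := by
    have e1 : Real.sqrt (2*(m:ℝ)) * Real.log (2*(m:ℝ)) ≤ (1/20) * (2*m) := by
      simpa using hb1
    have e2 : Real.log (2*(m:ℝ)) ≤ (1/40) * (2*m) := hb2
    nlinarith
  have hth' : (m:ℝ) * 1.386 - 0.2 * m ≤ theta (2*m) := by
    have := mul_le_mul_of_nonneg_left hlog4 (le_of_lt hmpos)
    linarith
  have hmono : theta (2*m) ≤ theta N := theta_mono (by omega)
  have hN2 : (N:ℝ) ≤ 2*(m:ℝ) + 1 := by exact_mod_cast hmN.2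
  have hm3 : (3:ℝ) ≤ (m:ℝ) := by exact_mod_cast (by omega : 3 ≤ m)
  linarith


lemma theta_def (N : ℕ) : theta N = ∑ p ∈ (Finset.range (N+1)).filter Nat.Prime, Real.log p :=
  rfl

lemma Kp_le : ∃ T : ℝ, 4 ≤ T ∧ ∀ t : ℝ, T ≤ t → (Kp ⌊t⌋₊ : ℝ) ≤ 3 * t / Real.log t := by
  have hev : ∀ᶠ t : ℝ in atTop, Real.sqrt t * Real.log t ≤ (1/10:ℝ) * t ∧
      Real.log t ≤ (1/10:ℝ) * t := by
    filter_upwards [eventually_sqrt_log_pow_le 1 (by norm_num : (0:ℝ) < 1/10),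
      eventually_log_le (by norm_num : (0:ℝ) < 1/10)] with t h1 h2
    exact ⟨by simpa using h1, h2⟩
  obtain ⟨T₀, hT₀⟩ := eventually_atTop.1 hev
  refine ⟨max T₀ 4, le_max_right _ _, ?_⟩
  intro t ht
  have ht4 : (4:ℝ) ≤ t := le_trans (le_max_right _ _) ht
  have htpos : (0:ℝ) < t := by linarith
  obtain ⟨hb1, hb2⟩ := hT₀ t (le_trans (le_max_left _ _) ht)
  have hlogt : (1:ℝ) < Real.log t := by
    calc (1:ℝ) < Real.log 4 := by
          rw [show (4:ℝ) = 2^2 by norm_num, Real.log_pow]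
          have := Real.log_two_gt_d9
          push_cast
          linarith
      _ ≤ Real.log t := Real.log_le_log (by norm_num) ht4
  have hlogpos : (0:ℝ) < Real.log t := by linarith
  set N := ⌊t⌋₊ with hN
  have hNt : (N:ℝ) ≤ t := Nat.floor_le htpos.le
  have htN : t < (N:ℝ) + 1 := Nat.lt_floor_add_one t
  set P := (Finset.range (N+1)).filter Nat.Prime with hP
  set small := P.filter (fun p => p ≤ Nat.sqrt N) with hsmall
  set large := P.filter (fun p => ¬ p ≤ Nat.sqrt N) with hlarge
  have hcard : Kp N = small.card + large.card := by
    rw [hsmall, hlarge, Finset.card_filter_add_card_filter_not]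
    rfl
  -- small count
  have hsmallcard : (small.card : ℝ) ≤ Real.sqrt t + 1 := by
    have h1 : small.card ≤ Nat.sqrt N + 1 := by
      calc small.card ≤ (Finset.range (Nat.sqrt N + 1)).card := by
            apply Finset.card_le_card
            intro p hp
            simp only [hsmall, hP, Finset.mem_filter, Finset.mem_range] at hp ⊢
            omega
        _ = Nat.sqrt N + 1 := Finset.card_range _
    have h2 : ((Nat.sqrt N : ℝ)) ≤ Real.sqrt t := by
      rw [Real.le_sqrt (by positivity) htpos.le]
      calc ((Nat.sqrt N : ℝ))^2 ≤ (N:ℝ) := by exact_mod_cast Nat.sqrt_le' N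
        _ ≤ t := hNt
    calc (small.card : ℝ) ≤ (Nat.sqrt N : ℝ) + 1 := by exact_mod_cast h1
      _ ≤ Real.sqrt t + 1 := by linarith
  -- large count
  have hlargecard : (large.card : ℝ) * (Real.log t / 2) ≤ t * Real.log 4 := by
    have hstep : ∀ p ∈ large, Real.log t / 2 ≤ Real.log p := by
      intro p hp
      simp only [hlarge, hP, Finset.mem_filter, Finset.mem_range, not_le] at hp
      obtain ⟨⟨hrange, hprime⟩, hsq⟩ := hp
      have hp2 : (2:ℝ) ≤ (p:ℝ) := by exact_mod_cast hprime.two_le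
      have hpsq : t < (p:ℝ)^2 := by
        have : N < p^2 := Nat.sqrt_lt'.1 hsq
        have : (N:ℝ) + 1 ≤ ((p:ℝ))^2 := by exact_mod_cast this
        linarith
      have := Real.log_le_log (by linarith) hpsq.le
      rw [Real.log_pow] at this
      push_cast at this
      linarith
    have hsum : (large.card : ℝ) * (Real.log t / 2) ≤ ∑ p ∈ large, Real.log p := by
      have := Finset.card_nsmul_le_sum large (fun p => Real.log (p:ℝ)) (Real.log t / 2) hstep
      simpa [nsmul_eq_mul] using this
    have hsub : ∑ p ∈ large, Real.log p ≤ theta N := by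
      rw [theta_def]
      apply Finset.sum_le_sum_of_subset_of_nonneg (Finset.filter_subset _ _)
      intro p _ _
      exact Real.log_natCast_nonneg p
    calc (large.card : ℝ) * (Real.log t / 2) ≤ theta N := le_trans hsum hsub
      _ ≤ (N:ℝ) * Real.log 4 := theta_le N
      _ ≤ t * Real.log 4 := by
          apply mul_le_mul_of_nonneg_right hNt (Real.log_nonneg (by norm_num))
  have hlarge2 : (large.card : ℝ) ≤ 2 * Real.log 4 * t / Real.log t := by
    rw [le_div_iff₀ hlogpos]
    nlinarith [hlargecard]
  have hlog4 : Real.log 4 ≤ 1.3863 := by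
    rw [show (4:ℝ) = 2^2 by norm_num, Real.log_pow]
    have := Real.log_two_lt_d9
    push_cast
    linarith
  have hfinal : (Kp N : ℝ) ≤ Real.sqrt t + 1 + 2 * Real.log 4 * t / Real.log t := by
    rw [hcard]
    push_cast
    linarith
  calc (Kp N : ℝ) ≤ Real.sqrt t + 1 + 2 * Real.log 4 * t / Real.log t := hfinal
    _ ≤ 3 * t / Real.log t := by
      rw [le_div_iff₀ hlogpos]
      have hexp : (Real.sqrt t + 1 + 2 * Real.log 4 * t / Real.log t) * Real.log t
          = Real.sqrt t * Real.log t + Real.log t + 2 * Real.log 4 * t := by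
        field_simp
      rw [hexp]
      nlinarith [hlog4, htpos, hb1, hb2]


lemma log2_pos : (0:ℝ) < Real.log 2 := Real.log_pos (by norm_num)

lemma deficit : ∃ Y : ℝ, 4 ≤ Y ∧ ∀ y : ℝ, Y ≤ y →
    ∑ p ∈ (Finset.range (⌊y⌋₊+1)).filter Nat.Prime, (Real.log y - Real.log p)
      ≤ 13 * y / Real.log y := by
  obtain ⟨T, hT4, hT⟩ := Kp_le
  obtain ⟨Y₀, hY₀⟩ := eventually_atTop.1 (eventually_sqrt_log_pow_le 2 one_pos)
  refine ⟨max (max (T^2) (Y₀ + 4)) 4, le_max_right _ _, ?_⟩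
  intro y hy
  have hy4 : (4:ℝ) ≤ y := le_trans (le_max_right _ _) hy
  have hypos : (0:ℝ) < y := by linarith
  have hyT2 : T^2 ≤ y := le_trans (le_max_left _ _) (le_trans (le_max_left _ _) hy)
  have hyY₀ : Y₀ ≤ y := by
    have := le_trans (le_max_right (T^2) (Y₀+4)) (le_trans (le_max_left _ _) hy)
    linarith
  have hlogy : (1:ℝ) < Real.log y := by
    calc (1:ℝ) < Real.log 4 := by
          rw [show (4:ℝ) = 2^2 by norm_num, Real.log_pow]
          have := Real.log_two_gt_d9; push_cast; linarith
      _ ≤ Real.log y := Real.log_le_log (by norm_num) hy4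
  have hlogypos : (0:ℝ) < Real.log y := by linarith
  set J : ℕ := ⌊Real.log y / Real.log 2⌋₊ with hJ
  set P := (Finset.range (⌊y⌋₊+1)).filter Nat.Prime with hP
  -- per-prime bound
  have hper : ∀ p ∈ P, Real.log y - Real.log p ≤
      Real.log 2 * (((Finset.range J).filter (fun j => (p:ℝ) ≤ y / 2^j)).card : ℝ) := by
    intro p hp
    simp only [hP, Finset.mem_filter, Finset.mem_range] at hp
    obtain ⟨hrange, hprime⟩ := hp
    have hp2 : (2:ℝ) ≤ (p:ℝ) := by exact_mod_cast hprime.two_le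
    have hppos : (0:ℝ) < (p:ℝ) := by linarith
    have hpley : (p:ℝ) ≤ y := by
      have : p ≤ ⌊y⌋₊ := by omega
      calc (p:ℝ) ≤ (⌊y⌋₊:ℝ) := by exact_mod_cast this
        _ ≤ y := Nat.floor_le hypos.le
    set c : ℝ := (Real.log y - Real.log p) / Real.log 2 with hc
    have hc0 : 0 ≤ c := by
      apply div_nonneg _ log2_pos.le
      have := Real.log_le_log hppos hpley
      linarith
    have hcJ : c ≤ (J:ℝ) := by
      have h1 : c ≤ Real.log y / Real.log 2 - 1 := by
        rw [hc]
        have hlp : Real.log 2 ≤ Real.log p := Real.log_le_log (by norm_num) hp2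
        rw [div_le_iff₀ log2_pos, sub_mul, one_mul, div_mul_cancel₀ _ log2_pos.ne']
        linarith
      have h2 : Real.log y / Real.log 2 - 1 < (J:ℝ) := by
        have := Nat.lt_floor_add_one (Real.log y / Real.log 2)
        rw [hJ]
        push_cast
        linarith [Nat.lt_floor_add_one (Real.log y / Real.log 2)]
      linarith
    have hceil : ⌈c⌉₊ ≤ J := Nat.ceil_le.2 hcJ
    have hsub : Finset.range ⌈c⌉₊ ⊆ (Finset.range J).filter (fun j => (p:ℝ) ≤ y / 2^j) := by
      intro j hj
      rw [Finset.mem_range] at hj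
      refine Finset.mem_filter.2 ⟨Finset.mem_range.2 (by omega), ?_⟩
      have hjc : (j:ℝ) < c := by
        have h1 : (j:ℝ) ≤ (⌈c⌉₊:ℝ) - 1 := by
          have : j + 1 ≤ ⌈c⌉₊ := hj
          have : ((j:ℝ) + 1) ≤ (⌈c⌉₊:ℝ) := by exact_mod_cast this
          linarith
        have h2 : (⌈c⌉₊:ℝ) < c + 1 := Nat.ceil_lt_add_one hc0
        linarith
      -- log p = log y - c log 2 < log y - j log 2 = log (y/2^j)
      have hkey : Real.log p < Real.log (y / 2^j) := by
        have h3 : Real.log p = Real.log y - c * Real.log 2 := by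
          rw [hc]
          field_simp
          ring
        rw [Real.log_div hypos.ne' (by positivity), Real.log_pow]
        have := mul_lt_mul_of_pos_right hjc log2_pos
        push_cast
        linarith [h3, mul_lt_mul_of_pos_right hjc log2_pos]
      have := Real.exp_lt_exp.2 hkey
      rw [Real.exp_log hppos, Real.exp_log (by positivity)] at this
      linarith
    have hcard : c ≤ (((Finset.range J).filter (fun j => (p:ℝ) ≤ y / 2^j)).card : ℝ) := by
      calc c ≤ (⌈c⌉₊:ℝ) := Nat.le_ceil c
        _ ≤ _ := by
          have := Finset.card_le_card hsub
          rw [Finset.card_range] at this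
          exact_mod_cast this
    calc Real.log y - Real.log p = Real.log 2 * c := by rw [hc]; field_simp
      _ ≤ _ := mul_le_mul_of_nonneg_left hcard log2_pos.le
  -- sum and swap
  have hswap : ∑ p ∈ P, (((Finset.range J).filter (fun j => (p:ℝ) ≤ y / 2^j)).card : ℝ)
      = ∑ j ∈ Finset.range J, (Kp ⌊y / 2^j⌋₊ : ℝ) := by
    have h1 : ∀ p ∈ P, (((Finset.range J).filter (fun j => (p:ℝ) ≤ y / 2^j)).card : ℝ)
        = ∑ j ∈ Finset.range J, if (p:ℝ) ≤ y / 2^j then (1:ℝ) else 0 := by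
      intro p _
      rw [Finset.card_filter]
      push_cast
      rfl
    rw [Finset.sum_congr rfl h1, Finset.sum_comm]
    apply Finset.sum_congr rfl
    intro j _
    have hset : P.filter (fun p : ℕ => (p:ℝ) ≤ y / 2^j)
        = (Finset.range (⌊y / 2^j⌋₊+1)).filter Nat.Prime := by
      ext p
      simp only [hP, Finset.mem_filter, Finset.mem_range]
      constructor
      · rintro ⟨⟨_, hprime⟩, hle⟩
        exact ⟨by
          have : p ≤ ⌊y / 2^j⌋₊ := Nat.le_floor hle
          omega, hprime⟩
      · rintro ⟨hlt, hprime⟩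
        have hple : p ≤ ⌊y / 2^j⌋₊ := by omega
        have h3 : (p:ℝ) ≤ y / 2^j := by
          calc (p:ℝ) ≤ (⌊y / 2^j⌋₊:ℝ) := by exact_mod_cast hple
            _ ≤ y / 2^j := Nat.floor_le (by positivity)
        have h4 : y / 2^j ≤ y := by
          apply div_le_self hypos.le
          exact one_le_pow₀ (by norm_num)
        refine ⟨⟨?_, hprime⟩, h3⟩
        have : p ≤ ⌊y⌋₊ := Nat.le_floor (le_trans h3 h4)
        omega
    rw [Finset.sum_boole, hset]
    rfl
  have hstep1 : ∑ p ∈ P, (Real.log y - Real.log p)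
      ≤ Real.log 2 * ∑ j ∈ Finset.range J, (Kp ⌊y / 2^j⌋₊ : ℝ) := by
    calc ∑ p ∈ P, (Real.log y - Real.log p)
        ≤ ∑ p ∈ P, Real.log 2 * (((Finset.range J).filter (fun j => (p:ℝ) ≤ y / 2^j)).card : ℝ) :=
          Finset.sum_le_sum hper
      _ = Real.log 2 * ∑ p ∈ P, (((Finset.range J).filter (fun j => (p:ℝ) ≤ y / 2^j)).card : ℝ) :=
          (Finset.mul_sum _ _ _).symm
      _ = _ := by rw [hswap]
  -- now bound the dyadic sum
  have hbound : ∀ j ∈ Finset.range J, (Kp ⌊y / 2^j⌋₊ : ℝ)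
      ≤ 6 / Real.log y * (y * (1/2)^j) + Real.sqrt y := by
    intro j _
    rcases le_or_gt (Real.sqrt y) (y / 2^j) with hc1 | hc2
    · -- big block: use Chebyshev
      have ht : T ≤ y / 2^j := by
        have hTsq : T ≤ Real.sqrt y := by
          rw [show T = Real.sqrt (T^2) by rw [Real.sqrt_sq (by linarith)]]
          exact Real.sqrt_le_sqrt hyT2
        linarith
      have h1 := hT _ ht
      have hloghalf : Real.log y / 2 ≤ Real.log (y / 2^j) := by
        calc Real.log y / 2 = Real.log (Real.sqrt y) := (Real.log_sqrt hypos.le).symm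
          _ ≤ Real.log (y / 2^j) := Real.log_le_log (Real.sqrt_pos.2 hypos) hc1
      have hlogpos2 : (0:ℝ) < Real.log (y / 2^j) := by linarith
      calc (Kp ⌊y / 2^j⌋₊ : ℝ) ≤ 3 * (y / 2^j) / Real.log (y / 2^j) := h1
        _ ≤ 3 * (y / 2^j) / (Real.log y / 2) := by
            apply div_le_div_of_nonneg_left (by positivity) (by linarith) hloghalf
        _ = 6 / Real.log y * (y * (1/2)^j) := by
            field_simp
            have h2 : (2:ℝ)^j * (1/2)^j = 1 := by rw [← mul_pow]; norm_num
            linear_combination (-6) * h2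
        _ ≤ 6 / Real.log y * (y * (1/2)^j) + Real.sqrt y := by
            have := Real.sqrt_nonneg y
            linarith
    · -- small block: trivial bound
      have h1 : (Kp ⌊y / 2^j⌋₊ : ℝ) ≤ (⌊y / 2^j⌋₊ : ℝ) := by exact_mod_cast Kp_le_self _
      have h2 : (⌊y / 2^j⌋₊ : ℝ) ≤ y / 2^j := Nat.floor_le (by positivity)
      have : (Kp ⌊y / 2^j⌋₊ : ℝ) ≤ Real.sqrt y := by linarith
      have hterm : (0:ℝ) ≤ 6 / Real.log y * (y * (1/2)^j) := by positivity
      linarith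
  have hsum : ∑ j ∈ Finset.range J, (Kp ⌊y / 2^j⌋₊ : ℝ)
      ≤ 12 * y / Real.log y + (J:ℝ) * Real.sqrt y := by
    calc ∑ j ∈ Finset.range J, (Kp ⌊y / 2^j⌋₊ : ℝ)
        ≤ ∑ j ∈ Finset.range J, (6 / Real.log y * (y * (1/2)^j) + Real.sqrt y) :=
          Finset.sum_le_sum hbound
      _ = 6 / Real.log y * y * ∑ j ∈ Finset.range J, (1/2:ℝ)^j + (J:ℝ) * Real.sqrt y := by
          rw [Finset.sum_add_distrib, Finset.sum_const, ← Finset.mul_sum, Finset.card_range,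
            nsmul_eq_mul]
          rw [show ∑ j ∈ Finset.range J, (y * (1/2:ℝ)^j) = y * ∑ j ∈ Finset.range J, (1/2:ℝ)^j
            from (Finset.mul_sum _ _ _).symm]
          ring
      _ ≤ 6 / Real.log y * y * 2 + (J:ℝ) * Real.sqrt y := by
          have hgeom : ∑ j ∈ Finset.range J, (1/2:ℝ)^j ≤ 2 := sum_geometric_two_le J
          have : (0:ℝ) ≤ 6 / Real.log y * y := by positivity
          nlinarith
      _ = 12 * y / Real.log y + (J:ℝ) * Real.sqrt y := by ring
  -- J * sqrt y ≤ (log y / log 2) * sqrt y ;  log2 * that = sqrt y * log y ≤ y / log y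
  have hJle : (J:ℝ) ≤ Real.log y / Real.log 2 := Nat.floor_le (by positivity)
  have hsq : Real.sqrt y * Real.log y ^ 2 ≤ y := by
    have := hY₀ y hyY₀
    linarith [hY₀ y hyY₀]
  have hlog2_le : Real.log 2 ≤ 1 := by
    have := Real.log_le_sub_one_of_pos (by norm_num : (0:ℝ) < 2)
    linarith
  calc ∑ p ∈ P, (Real.log y - Real.log p)
      ≤ Real.log 2 * ∑ j ∈ Finset.range J, (Kp ⌊y / 2^j⌋₊ : ℝ) := hstep1
    _ ≤ Real.log 2 * (12 * y / Real.log y + (J:ℝ) * Real.sqrt y) := by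
        apply mul_le_mul_of_nonneg_left hsum log2_pos.le
    _ = 12 * Real.log 2 * (y / Real.log y) + Real.log 2 * (J:ℝ) * Real.sqrt y := by ring
    _ ≤ 12 * (y / Real.log y) + Real.log y * Real.sqrt y := by
        have h1 : 12 * Real.log 2 * (y / Real.log y) ≤ 12 * (y / Real.log y) := by
          apply mul_le_mul_of_nonneg_right _ (by positivity)
          linarith
        have h2 : Real.log 2 * (J:ℝ) * Real.sqrt y ≤ Real.log y * Real.sqrt y := by
          apply mul_le_mul_of_nonneg_right _ (Real.sqrt_nonneg y)
          calc Real.log 2 * (J:ℝ) ≤ Real.log 2 * (Real.log y / Real.log 2) :=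
                mul_le_mul_of_nonneg_left hJle log2_pos.le
            _ = Real.log y := by field_simp
        linarith
    _ ≤ 13 * y / Real.log y := by
        have h3 : Real.log y * Real.sqrt y ≤ y / Real.log y := by
          rw [le_div_iff₀ hlogypos]
          calc Real.log y * Real.sqrt y * Real.log y = Real.sqrt y * Real.log y ^ 2 := by ring
            _ ≤ y := hsq
        have : 12 * (y / Real.log y) + y / Real.log y = 13 * y / Real.log y := by ring
        linarith


lemma omega_primorial (N : ℕ) : omegaN (primorial N) = Kp N := by
  unfold omegaN Kp primorial
  rw [Nat.primeFactors_prod]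
  intro p hp
  exact (Finset.mem_filter.1 hp).2

lemma eventually_cond : ∀ᶠ t : ℝ in atTop, (Real.log t)^2 + 2 * Real.log t + 2 ≤ t := by
  have h := Real.isLittleO_pow_log_id_atTop (n := 2).bound (by norm_num : (0:ℝ) < 1/4)
  have h1 := Real.isLittleO_pow_log_id_atTop (n := 1).bound (by norm_num : (0:ℝ) < 1/8)
  filter_upwards [h, h1, eventually_ge_atTop (8:ℝ), Real.tendsto_log_atTop.eventually_ge_atTop 0]
    with t h2 h3 ht hlt
  have htn : 0 ≤ t := by linarith
  have e2 : (Real.log t)^2 ≤ 1/4 * t := by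
    calc (Real.log t)^2 ≤ ‖(Real.log t)^2‖ := le_abs_self _
      _ ≤ 1/4 * ‖id t‖ := h2
      _ = 1/4 * t := by simp [Real.norm_eq_abs, abs_of_nonneg htn]
  have e1 : Real.log t ≤ 1/8 * t := by
    calc Real.log t ≤ ‖(Real.log t)^1‖ := by simpa using le_abs_self (Real.log t)
      _ ≤ 1/8 * ‖id t‖ := h3
      _ = 1/8 * t := by simp [Real.norm_eq_abs, abs_of_nonneg htn]
  nlinarith



end MaxOmega

open MaxOmega in
set_option maxHeartbeats 1000000 in
theorem max_omega_asymptotic :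
    ∃ C : ℝ, 0 < C ∧ ∃ X : ℝ, ∀ x : ℝ, X ≤ x →
      (∀ n : ℕ, 2 ≤ n → (n : ℝ) ≤ x →
        (omegaN n : ℝ) ≤ Real.log x / Real.log (Real.log x) * (1 + C / Real.log (Real.log x))) ∧
      (∃ n : ℕ, 2 ≤ n ∧ (n : ℝ) ≤ x ∧
        Real.log x / Real.log (Real.log x) * (1 - C / Real.log (Real.log x)) ≤ (omegaN n : ℝ)) := by
  classical
  obtain ⟨Y, hY4, hdef⟩ := deficit
  obtain ⟨M, hM3, hthge⟩ := theta_ge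
  have hev : ∀ᶠ x : ℝ in atTop,
      (1 ≤ Real.log (Real.log x)) ∧ (Y ≤ Real.log x) ∧ ((primorial M : ℝ) ≤ x) ∧
      ((Real.log (Real.log x))^2 + 2 * Real.log (Real.log x) + 2 ≤ Real.log x) := by
    have c1 : ∀ᶠ x : ℝ in atTop, 1 ≤ Real.log (Real.log x) :=
      (Real.tendsto_log_atTop.comp Real.tendsto_log_atTop).eventually_ge_atTop 1
    have c2 : ∀ᶠ x : ℝ in atTop, Y ≤ Real.log x :=
      Real.tendsto_log_atTop.eventually_ge_atTop Y
    have c3 : ∀ᶠ x : ℝ in atTop, (primorial M : ℝ) ≤ x := eventually_ge_atTop _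
    have c4 : ∀ᶠ x : ℝ in atTop,
        (Real.log (Real.log x))^2 + 2 * Real.log (Real.log x) + 2 ≤ Real.log x :=
      Real.tendsto_log_atTop.eventually eventually_cond
    filter_upwards [c1, c2, c3, c4] with x h1 h2 h3 h4
    exact ⟨h1, h2, h3, h4⟩
  obtain ⟨X, hX⟩ := eventually_atTop.1 hev
  refine ⟨15, by norm_num, X, fun x hx => ?_⟩
  obtain ⟨hl1, hYL, hpM, hpoly⟩ := hX x hx
  set L := Real.log x with hL
  set l := Real.log L with hl
  have hlpos : (0:ℝ) < l := by linarith
  have hL1 : (1:ℝ) < L := by nlinarith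
  have hLpos : (0:ℝ) < L := by linarith
  have hxpos : (0:ℝ) < x := by
    have : (0:ℝ) < primorial M := by exact_mod_cast primorial_pos M
    linarith
  constructor
  · -- upper bound
    intro n h2n hnx
    set T := n.primeFactors with hT
    have hnpos : 0 < n := by omega
    have hk : omegaN n = T.card := rfl
    -- step 1 : l * card ≤ ∑ log q + ∑ max (l - log q) 0
    have step1 : l * (T.card : ℝ) ≤
        (∑ q ∈ T, Real.log q) + ∑ q ∈ T, max (l - Real.log q) 0 := by
      rw [← Finset.sum_add_distrib]
      have := Finset.card_nsmul_le_sum T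
        (fun q : ℕ => Real.log q + max (l - Real.log q) 0) l
        (fun q _ => by
          show l ≤ Real.log (q:ℝ) + max (l - Real.log (q:ℝ)) 0
          have := le_max_left (l - Real.log (q:ℝ)) 0
          linarith)
      rw [nsmul_eq_mul] at this
      linarith [this]
    -- step 2
    have step2 : (∑ q ∈ T, Real.log q) ≤ L := by
      have hd : (∏ q ∈ T, q) ∣ n := Nat.prod_primeFactors_dvd n
      have hple : (∏ q ∈ T, q) ≤ n := Nat.le_of_dvd hnpos hd
      have hprodpos : ∀ q ∈ T, (q:ℝ) ≠ 0 := by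
        intro q hq
        have := Nat.prime_of_mem_primeFactors hq
        exact_mod_cast this.pos.ne'
      calc (∑ q ∈ T, Real.log q) = Real.log (∏ q ∈ T, (q:ℝ)) := (Real.log_prod hprodpos).symm
        _ = Real.log ((∏ q ∈ T, q : ℕ) : ℝ) := by rw [Nat.cast_prod]
        _ ≤ Real.log n := Real.log_le_log (by
              have : 0 < ∏ q ∈ T, q :=
                Finset.prod_pos (fun q hq => (Nat.prime_of_mem_primeFactors hq).pos)
              exact_mod_cast this) (by exact_mod_cast hple)
        _ ≤ L := Real.log_le_log (by exact_mod_cast hnpos) hnx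
    -- step 3
    have step3 : (∑ q ∈ T, max (l - Real.log q) 0) ≤
        ∑ p ∈ (Finset.range (⌊L⌋₊+1)).filter Nat.Prime, (l - Real.log p) := by
      have hsplit : (∑ q ∈ T, max (l - Real.log q) 0)
          = ∑ q ∈ T.filter (fun q => q ≤ ⌊L⌋₊), max (l - Real.log q) 0 := by
        symm
        apply Finset.sum_subset (Finset.filter_subset _ _)
        intro q hq hq'
        simp only [Finset.mem_filter, not_and, not_le] at hq'
        have hqL : L < (q:ℝ) := by
          have h1 : ⌊L⌋₊ < q := hq' hq
          have h2 : ⌊L⌋₊ + 1 ≤ q := h1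
          calc L < (⌊L⌋₊:ℝ) + 1 := Nat.lt_floor_add_one L
            _ ≤ (q:ℝ) := by exact_mod_cast h2
        have : l < Real.log q := by
          rw [hl]
          exact Real.log_lt_log hLpos hqL
        rw [max_eq_right (by linarith)]
      have hle : ∀ q : ℕ, q ≤ ⌊L⌋₊ → q ≠ 0 → Real.log q ≤ l := by
        intro q hq hq0
        have hpL : (q:ℝ) ≤ L := by
          calc (q:ℝ) ≤ (⌊L⌋₊:ℝ) := by exact_mod_cast hq
            _ ≤ L := Nat.floor_le hLpos.le
        rw [hl]
        exact Real.log_le_log (by exact_mod_cast Nat.pos_of_ne_zero hq0) hpL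
      have hcongr : ∑ q ∈ T.filter (fun q => q ≤ ⌊L⌋₊), max (l - Real.log q) 0
          = ∑ q ∈ T.filter (fun q => q ≤ ⌊L⌋₊), (l - Real.log q) := by
        apply Finset.sum_congr rfl
        intro q hq
        simp only [Finset.mem_filter] at hq
        have := hle q hq.2 (Nat.prime_of_mem_primeFactors hq.1).pos.ne'
        rw [max_eq_left (by linarith)]
      rw [hsplit, hcongr]
      apply Finset.sum_le_sum_of_subset_of_nonneg
      · intro q hq
        simp only [Finset.mem_filter, Finset.mem_range] at hq ⊢
        exact ⟨by omega, Nat.prime_of_mem_primeFactors hq.1⟩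
      · intro p hp _
        simp only [Finset.mem_filter, Finset.mem_range] at hp
        have := hle p (by omega) hp.2.pos.ne'
        linarith
    -- combine
    have hS := hdef L hYL
    have hcomb : l * (T.card : ℝ) ≤ L + 13 * L / l := by
      calc l * (T.card : ℝ) ≤ (∑ q ∈ T, Real.log q) + ∑ q ∈ T, max (l - Real.log q) 0 := step1
        _ ≤ L + 13 * L / l := by
            have := le_trans step3 hS
            linarith
    rw [hk]
    have h1 : (T.card:ℝ) ≤ (L + 13*L/l)/l := by
      rw [le_div_iff₀ hlpos]
      linarith [hcomb]
    have e1 : (L + 13*L/l)/l = L/l + 13*L/l^2 := by field_simp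
    have e2 : L/l * (1+15/l) = L/l + 15*L/l^2 := by field_simp
    have e3 : 13*L/l^2 ≤ 15*L/l^2 := by gcongr <;> linarith
    calc (T.card:ℝ) ≤ (L + 13*L/l)/l := h1
      _ = L/l + 13*L/l^2 := e1
      _ ≤ L/l + 15*L/l^2 := by linarith
      _ = L/l * (1+15/l) := e2.symm
  · -- lower bound
    set B := ⌊2*L⌋₊ + M + 2 with hB
    set Pr : ℕ → Prop := fun N => (primorial N : ℝ) ≤ x with hPr
    set N := Nat.findGreatest Pr B with hNdef
    have hMB : M ≤ B := by rw [hB]; omega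
    have hPM : Pr M := hpM
    have hMN : M ≤ N := Nat.le_findGreatest hMB hPM
    have hPN : Pr N := Nat.findGreatest_spec hMB hPM
    have hthN : (N:ℝ)/2 ≤ theta N := hthge N hMN
    have hthL : theta N ≤ L := by
      rw [theta_eq, hL]
      exact Real.log_le_log (by exact_mod_cast primorial_pos N) hPN
    have hN2L : (N:ℝ) ≤ 2*L := by linarith
    have hNfl : N ≤ ⌊2*L⌋₊ := Nat.le_floor hN2L
    have hnot : ¬ Pr (N+1) := by
      apply Nat.findGreatest_is_greatest (n := B) (k := N+1)
      · rw [← hNdef]; omega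
      · rw [hB]; omega
    have hxlt : x < (primorial (N+1) : ℝ) := lt_of_not_ge hnot
    have hLlt : L < theta (N+1) := by
      rw [theta_eq, hL]
      exact Real.log_lt_log hxpos hxlt
    have hstep : theta (N+1) ≤ theta N + Real.log ((N:ℝ)+1) := theta_succ_le N
    have hN3 : 3 ≤ N := le_trans hM3 hMN
    have hNR : (3:ℝ) ≤ (N:ℝ) := by exact_mod_cast hN3
    have hlog2 : Real.log 2 ≤ 1 := by
      have := Real.log_le_sub_one_of_pos (by norm_num : (0:ℝ) < 2)
      linarith
    have hlog4 : Real.log 4 ≤ 2 := by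
      rw [show (4:ℝ) = 2*2 by norm_num, Real.log_mul (by norm_num) (by norm_num)]
      linarith
    have hlogN : Real.log (N:ℝ) ≤ l + 1 := by
      calc Real.log (N:ℝ) ≤ Real.log (2*L) := Real.log_le_log (by linarith) hN2L
        _ = Real.log 2 + l := by rw [Real.log_mul (by norm_num) hLpos.ne', hl]
        _ ≤ l + 1 := by linarith
    have hlogN1 : Real.log ((N:ℝ)+1) ≤ l + 2 := by
      calc Real.log ((N:ℝ)+1) ≤ Real.log (4*L) := Real.log_le_log (by linarith) (by linarith)
        _ = Real.log 4 + l := by rw [Real.log_mul (by norm_num) hLpos.ne', hl]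
        _ ≤ l + 2 := by linarith
    have hthNl : L - l - 2 ≤ theta N := by linarith
    have hKnn : (0:ℝ) ≤ (Kp N : ℝ) := by positivity
    have hKp : L - l - 2 ≤ (Kp N : ℝ) * (l + 1) := by
      have h1 := theta_le_Kp_mul N
      have h2 := mul_le_mul_of_nonneg_left hlogN hKnn
      linarith
    refine ⟨primorial N, ?_, hPN, ?_⟩
    · unfold primorial
      have h2mem : 2 ∈ (Finset.range (N + 1)).filter Nat.Prime :=
        Finset.mem_filter.2 ⟨Finset.mem_range.2 (by omega), Nat.prime_two⟩
      exact Finset.single_le_prod' (fun p hp => (Finset.mem_filter.1 hp).2.one_le) h2mem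
    · rw [omega_primorial]
      have key : L/l * (1 - 15/l) = L*(l-15)/(l*l) := by
        rw [show (1 - 15/l) = (l-15)/l by rw [sub_div, div_self hlpos.ne'],
          div_mul_div_comm]
      rw [key, div_le_iff₀ (by positivity)]
      have hq : (l^2 + 2*l + 2)*l ≤ L*l := mul_le_mul_of_nonneg_right hpoly hlpos.le
      have hpoly2 : L*(l-15)*(l+1) ≤ (L - l - 2)*(l*l) := by nlinarith [hq, hLpos.le, hlpos.le, hl1]
      have h6 : (L - l - 2)*(l*l) ≤ ((Kp N : ℝ) * (l+1))*(l*l) :=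
        mul_le_mul_of_nonneg_right hKp (mul_self_nonneg l)
      have h7 : L*(l-15)*(l+1) ≤ ((Kp N : ℝ)*(l*l))*(l+1) := by nlinarith [hpoly2, h6]
      exact le_of_mul_le_mul_right h7 (by linarith)
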